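/- Let A = diag{a₁,…,a_n} with distinct a_k all in the open upper half-plane, let Π be an n×m matrix whose rows ψ₁,…,ψ_n are all nonzero, and suppose S = S* satisfies A S − S A* = i Π Π*. Then S is positive definite. -/

import Mathlib

open Matrix
open scoped ComplexOrder
open scoped ComplexConjugate
open Finset

private lemma stmt3_add_one_ne (u : ℂ) (hu : 0 < u.re) : u + 1 ≠ 0 := by
  intro h
  have := congrArg Complex.re h
  simp [Complex.add_re] at this
  linarith

private lemma stmt3_norm_lt (u : ℂ) (hu : 0 < u.re) : ‖(u - 1) / (u + 1)‖ < 1 := by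
  have hne : u + 1 ≠ 0 := stmt3_add_one_ne u hu
  rw [norm_div, div_lt_one (by simpa [norm_pos_iff] using hne)]
  rw [Complex.norm_def, Complex.norm_def]
  apply Real.sqrt_lt_sqrt (Complex.normSq_nonneg _)
  simp only [Complex.normSq_apply, Complex.sub_re, Complex.sub_im, Complex.add_re,
    Complex.add_im, Complex.one_re, Complex.one_im]
  nlinarith

private lemma stmt3_key (u v : ℂ) (hu : 0 < u.re) (hv : 0 < v.re) :
    (u + conj v) * ((1 - (u - 1) / (u + 1)) * (1 - conj ((v - 1) / (v + 1))))
      = 2 * (1 - (u - 1) / (u + 1) * conj ((v - 1) / (v + 1))) := by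
  have h1 : u + 1 ≠ 0 := stmt3_add_one_ne u hu
  have h2 : conj v + 1 ≠ 0 := by
    refine stmt3_add_one_ne _ ?_
    simpa using hv
  rw [map_div₀, map_sub, map_add, _root_.map_one]
  field_simp
  ring

private lemma stmt3_split (c P q : ℂ) (hq : 1 - q ≠ 0) (N : ℕ) :
    c * (P / (2 * (1 - q)))
      = (∑ p ∈ Finset.range N, c * P * q ^ p) / 2 + c * P / (2 * (1 - q)) * q ^ N := by
  have hq' : q ≠ 1 := fun h => hq (by rw [h]; ring)
  have hq'' : q - 1 ≠ 0 := sub_ne_zero.mpr hq'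
  rw [← Finset.mul_sum, geom_sum_eq hq']
  field_simp
  ring

private lemma stmt3_sum_comm3 {ι κ μ : Type*} [Fintype ι] [Fintype κ]
    (s : Finset μ) (f : ι → κ → μ → ℂ) :
    ∑ j, ∑ k, ∑ p ∈ s, f j k p = ∑ p ∈ s, ∑ j, ∑ k, f j k p := by
  calc ∑ j, ∑ k, ∑ p ∈ s, f j k p = ∑ j, ∑ p ∈ s, ∑ k, f j k p :=
        Finset.sum_congr rfl fun _ _ => Finset.sum_comm
    _ = ∑ p ∈ s, ∑ j, ∑ k, f j k p := Finset.sum_comm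

/-- If A = diag{a₁,…,aₙ} with distinct aₖ in the open upper half-plane, the rows of Π
are nonzero, S = S* and A S − S A* = i Π Π*, then S > 0. -/
theorem stmt_3 {n m : ℕ} (a : Fin n → ℂ) (S : Matrix (Fin n) (Fin n) ℂ)
    (B : Matrix (Fin n) (Fin m) ℂ)
    (ha : Function.Injective a)
    (hup : ∀ k, 0 < (a k).im)
    (hrow : ∀ k, B k ≠ 0)
    (hS : S.IsHermitian)
    (hid : Matrix.diagonal a * S - S * (Matrix.diagonal a)ᴴ = Complex.I • (B * Bᴴ)) :
    S.PosDef := by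
  refine Matrix.PosDef.of_dotProduct_mulVec_pos hS ?_
  intro x hx
  obtain ⟨Q, hQdef⟩ : ∃ Q : ℂ, Q = dotProduct (star x) (S *ᵥ x) := ⟨_, rfl⟩
  rw [show dotProduct (star x) (S *ᵥ x) = Q from hQdef.symm]
  obtain ⟨d, hd⟩ : ∃ d : Fin n → ℂ, d = fun k => -Complex.I * a k := ⟨_, rfl⟩
  have hdre : ∀ k, 0 < (d k).re := by
    intro k
    simp only [hd, Complex.mul_re, Complex.neg_re, Complex.I_re, Complex.neg_im, Complex.I_im]
    simpa using hup k
  obtain ⟨W, hW⟩ : ∃ W : Fin n → ℂ, W = fun k => (d k - 1) / (d k + 1) := ⟨_, rfl⟩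
  have hWlt : ∀ k, ‖W k‖ < 1 := by
    intro k
    simpa only [hW] using stmt3_norm_lt (d k) (hdre k)
  have hW1 : ∀ k, 1 - W k ≠ 0 := by
    intro k h
    have h2 : W k = 1 := by linear_combination -h
    have := hWlt k
    rw [h2] at this
    simp at this
  have hqlt : ∀ j k, ‖W j * conj (W k)‖ < 1 := by
    intro j k
    rw [norm_mul, RCLike.norm_conj]
    nlinarith [norm_nonneg (W j), norm_nonneg (W k), hWlt j, hWlt k]
  have hq1 : ∀ j k, (1 : ℂ) - W j * conj (W k) ≠ 0 := by
    intro j k h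
    have h2 : W j * conj (W k) = 1 := by linear_combination -h
    have := hqlt j k
    rw [h2] at this
    simp at this
  -- entrywise identity
  have hent : ∀ j k, (d j + conj (d k)) * S j k = (B * Bᴴ) j k := by
    intro j k
    have h0 := Matrix.ext_iff.mpr hid j k
    simp only [Matrix.sub_apply, Matrix.diagonal_mul, Matrix.diagonal_conjTranspose,
      Matrix.mul_diagonal, Matrix.smul_apply, Pi.star_apply, RCLike.star_def,
      smul_eq_mul] at h0
    simp only [hd, _root_.map_mul, map_neg, Complex.conj_I]
    have hI : Complex.I * Complex.I = -1 := Complex.I_mul_I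
    linear_combination (-Complex.I) * h0 - (B * Bᴴ) j k * hI
  have hS2 : ∀ j k, S j k
      = (B * Bᴴ) j k * ((1 - W j) * (1 - conj (W k))) / (2 * (1 - W j * conj (W k))) := by
    intro j k
    rw [eq_div_iff (mul_ne_zero two_ne_zero (hq1 j k))]
    have hk := stmt3_key (d j) (d k) (hdre j) (hdre k)
    simp only [hW]
    linear_combination (-(S j k)) * hk + ((1 - (d j - 1) / (d j + 1)) *
      (1 - conj ((d k - 1) / (d k + 1)))) * hent j k
  obtain ⟨T, hT⟩ : ∃ T : Fin m → ℕ → ℂ,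
      T = fun l p => ∑ j, conj (x j) * B j l * (1 - W j) * W j ^ p := ⟨_, rfl⟩
  obtain ⟨coef, hcoef⟩ : ∃ coef : Fin n → Fin n → ℂ,
      coef = fun j k =>
        conj (x j) * x k * ((B * Bᴴ) j k * ((1 - W j) * (1 - conj (W k))))
          / (2 * (1 - W j * conj (W k))) := ⟨_, rfl⟩
  have hQexp : Q = ∑ j, ∑ k, conj (x j) * x k * S j k := by
    rw [hQdef]
    simp only [dotProduct, Matrix.mulVec, Pi.star_apply, RCLike.star_def,
      Finset.mul_sum]
    exact Finset.sum_congr rfl fun j _ => Finset.sum_congr rfl fun k _ => by ring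
  -- per-power Gram identity
  have h3 : ∀ p : ℕ,
      (∑ j, ∑ k, conj (x j) * x k * ((B * Bᴴ) j k * ((1 - W j) * (1 - conj (W k))))
        * (W j * conj (W k)) ^ p)
      = ∑ l, T l p * conj (T l p) := by
    intro p
    have hjk : ∀ j k : Fin n,
        conj (x j) * x k * ((B * Bᴴ) j k * ((1 - W j) * (1 - conj (W k))))
          * (W j * conj (W k)) ^ p
        = ∑ l, (conj (x j) * B j l * (1 - W j) * W j ^ p)
            * conj (conj (x k) * B k l * (1 - W k) * W k ^ p) := by
      intro j k
      simp only [Matrix.mul_apply, Matrix.conjTranspose_apply, RCLike.star_def,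
        Finset.sum_mul, Finset.mul_sum]
      refine Finset.sum_congr rfl fun l _ => ?_
      simp only [_root_.map_mul, map_pow, map_sub, _root_.map_one, Complex.conj_conj]
      ring
    calc (∑ j, ∑ k, conj (x j) * x k * ((B * Bᴴ) j k * ((1 - W j) * (1 - conj (W k))))
          * (W j * conj (W k)) ^ p)
        = ∑ j, ∑ k, ∑ l, (conj (x j) * B j l * (1 - W j) * W j ^ p)
            * conj (conj (x k) * B k l * (1 - W k) * W k ^ p) :=
          Finset.sum_congr rfl fun j _ => Finset.sum_congr rfl fun k _ => hjk j k
      _ = ∑ j, ∑ l, ∑ k, (conj (x j) * B j l * (1 - W j) * W j ^ p)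
            * conj (conj (x k) * B k l * (1 - W k) * W k ^ p) :=
          Finset.sum_congr rfl fun j _ => Finset.sum_comm
      _ = ∑ l, ∑ j, ∑ k, (conj (x j) * B j l * (1 - W j) * W j ^ p)
            * conj (conj (x k) * B k l * (1 - W k) * W k ^ p) := Finset.sum_comm
      _ = ∑ l, T l p * conj (T l p) := by
          refine Finset.sum_congr rfl fun l _ => ?_
          rw [← Finset.sum_mul_sum]
          congr 1
          · simp only [hT]
          · simp only [hT]
            exact (_root_.map_sum (starRingEnd ℂ) _ _).symm
  -- the main decomposition
  have hmain : ∀ N : ℕ, Q = (∑ p ∈ Finset.range N, ∑ l, T l p * conj (T l p)) / 2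
      + ∑ j, ∑ k, coef j k * (W j * conj (W k)) ^ N := by
    intro N
    rw [hQexp]
    have h2 : ∀ j k : Fin n, conj (x j) * x k * S j k
        = (∑ p ∈ Finset.range N,
            conj (x j) * x k * ((B * Bᴴ) j k * ((1 - W j) * (1 - conj (W k))))
              * (W j * conj (W k)) ^ p) / 2
          + coef j k * (W j * conj (W k)) ^ N := by
      intro j k
      rw [hS2 j k, hcoef]
      exact stmt3_split _ _ _ (hq1 j k) N
    calc (∑ j, ∑ k, conj (x j) * x k * S j k)
        = ∑ j, ∑ k, ((∑ p ∈ Finset.range N,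
            conj (x j) * x k * ((B * Bᴴ) j k * ((1 - W j) * (1 - conj (W k))))
              * (W j * conj (W k)) ^ p) / 2
          + coef j k * (W j * conj (W k)) ^ N) :=
          Finset.sum_congr rfl fun j _ => Finset.sum_congr rfl fun k _ => h2 j k
      _ = (∑ j, ∑ k, ∑ p ∈ Finset.range N,
            conj (x j) * x k * ((B * Bᴴ) j k * ((1 - W j) * (1 - conj (W k))))
              * (W j * conj (W k)) ^ p) / 2
          + ∑ j, ∑ k, coef j k * (W j * conj (W k)) ^ N := by
          simp only [Finset.sum_add_distrib, Finset.sum_div]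
      _ = (∑ p ∈ Finset.range N, ∑ j, ∑ k,
            conj (x j) * x k * ((B * Bᴴ) j k * ((1 - W j) * (1 - conj (W k))))
              * (W j * conj (W k)) ^ p) / 2
          + ∑ j, ∑ k, coef j k * (W j * conj (W k)) ^ N := by
          congr 1
          rw [stmt3_sum_comm3]
      _ = (∑ p ∈ Finset.range N, ∑ l, T l p * conj (T l p)) / 2
          + ∑ j, ∑ k, coef j k * (W j * conj (W k)) ^ N := by
          congr 1
          rw [Finset.sum_div, Finset.sum_div]
          exact Finset.sum_congr rfl fun p _ => by rw [h3 p]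
    -- real part formula
  have hreal : ∀ N : ℕ, Q.re
      = (∑ p ∈ Finset.range N, ∑ l, Complex.normSq (T l p)) / 2
        + (∑ j, ∑ k, coef j k * (W j * conj (W k)) ^ N).re := by
    intro N
    rw [hmain N, Complex.add_re]
    congr 1
    have hc : (∑ p ∈ Finset.range N, ∑ l, T l p * conj (T l p))
        = ((∑ p ∈ Finset.range N, ∑ l, Complex.normSq (T l p) : ℝ) : ℂ) := by
      push_cast
      exact Finset.sum_congr rfl fun p _ => Finset.sum_congr rfl fun l _ =>
        (Complex.mul_conj (T l p))
    rw [hc]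
    have : ((((∑ p ∈ Finset.range N, ∑ l, Complex.normSq (T l p)) : ℝ)) : ℂ) / 2
        = (((∑ p ∈ Finset.range N, ∑ l, Complex.normSq (T l p)) / 2 : ℝ) : ℂ) := by
      push_cast
      ring
    rw [this, Complex.ofReal_re]
  -- choose a nonzero entry of x and of the corresponding row of B
  obtain ⟨j₀, hj₀⟩ := Function.ne_iff.mp hx
  rw [Pi.zero_apply] at hj₀
  obtain ⟨l₀, hl₀⟩ := Function.ne_iff.mp (hrow j₀)
  rw [Pi.zero_apply] at hl₀
  -- Vandermonde argument: some T l₀ p with p < n is nonzero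
  have hWinj : Function.Injective W := by
    intro j k h
    apply ha
    have hdj : d j = d k := by
      simp only [hW] at h
      have h1 : d j + 1 ≠ 0 := stmt3_add_one_ne _ (hdre j)
      have h2 : d k + 1 ≠ 0 := stmt3_add_one_ne _ (hdre k)
      rw [div_eq_div_iff h1 h2] at h
      linear_combination h / 2
    simp only [hd] at hdj
    have : Complex.I * (-Complex.I * a j) = Complex.I * (-Complex.I * a k) := by rw [hdj]
    simpa [Complex.I_mul_I, mul_assoc, Complex.I_ne_zero] using this
  have hvdm : ∃ p, p < n ∧ T l₀ p ≠ 0 := by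
    by_contra hcon
    push_neg at hcon
    have hvz : (fun j => conj (x j) * B j l₀ * (1 - W j)) = 0 := by
      apply Matrix.eq_zero_of_vecMul_eq_zero
        (M := Matrix.vandermonde W)
        (Matrix.det_vandermonde_ne_zero_iff.mpr hWinj)
      funext p
      have h0 := hcon (p : ℕ) p.isLt
      rw [hT] at h0
      simp only [Matrix.vecMul, dotProduct, Matrix.vandermonde, Pi.zero_apply,
        Matrix.of_apply]
      exact h0
    have h0 := congrFun hvz j₀
    simp only [Pi.zero_apply, mul_eq_zero, map_eq_zero] at h0
    rcases h0 with (h | h) | h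
    · exact hj₀ h
    · exact hl₀ h
    · exact hW1 j₀ h
  obtain ⟨p₀, hp₀n, hp₀⟩ := hvdm
  have hε : 0 < Complex.normSq (T l₀ p₀) := Complex.normSq_pos.mpr hp₀
  -- the remainder tends to zero
  have hRlim : Filter.Tendsto
      (fun N => (∑ j, ∑ k, coef j k * (W j * conj (W k)) ^ N).re)
      Filter.atTop (nhds 0) := by
    have h0 : Filter.Tendsto
        (fun N => ∑ j, ∑ k, coef j k * (W j * conj (W k)) ^ N)
        Filter.atTop (nhds 0) := by
      have := tendsto_finset_sum (Finset.univ : Finset (Fin n)) fun j _ =>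
        tendsto_finset_sum (Finset.univ : Finset (Fin n)) fun k _ =>
          ((tendsto_pow_atTop_nhds_zero_of_norm_lt_one (hqlt j k)).const_mul (coef j k))
      simpa using this
    have h2 : Filter.Tendsto Complex.re (nhds 0) (nhds 0) := by
      simpa using Complex.continuous_re.tendsto 0
    exact h2.comp h0
  -- eventual bound
  have hev : ∀ N, n ≤ N →
      (∑ j, ∑ k, coef j k * (W j * conj (W k)) ^ N).re
        ≤ Q.re - Complex.normSq (T l₀ p₀) / 2 := by
    intro N hN
    have h := hreal N
    have hsum : Complex.normSq (T l₀ p₀)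
        ≤ ∑ p ∈ Finset.range N, ∑ l, Complex.normSq (T l p) := by
      have h1 : Complex.normSq (T l₀ p₀) ≤ ∑ l, Complex.normSq (T l p₀) :=
        Finset.single_le_sum (f := fun l => Complex.normSq (T l p₀))
          (fun _ _ => Complex.normSq_nonneg _) (Finset.mem_univ _)
      refine le_trans h1 (Finset.single_le_sum (f := fun p => ∑ l, Complex.normSq (T l p))
        (fun _ _ => Finset.sum_nonneg fun _ _ => Complex.normSq_nonneg _)
        (Finset.mem_range.mpr (lt_of_lt_of_le hp₀n hN)))
    linarith
  have hfin : Complex.normSq (T l₀ p₀) / 2 ≤ Q.re := by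
    have := le_of_tendsto hRlim (Filter.eventually_atTop.mpr ⟨n, hev⟩)
    linarith
  -- Q is real
  have him : Q.im = 0 := by
    have hconj : conj Q = Q := by
      calc conj Q = ∑ j, ∑ k, x j * conj (x k) * S k j := by
            rw [hQexp, _root_.map_sum]
            refine Finset.sum_congr rfl fun j _ => ?_
            rw [_root_.map_sum]
            refine Finset.sum_congr rfl fun k _ => ?_
            have hsjk : conj (S j k) = S k j := by
              have : Sᴴ k j = S k j := by rw [hS]
              rw [← this, Matrix.conjTranspose_apply, RCLike.star_def]
            simp only [_root_.map_mul, Complex.conj_conj, hsjk]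
      _ = ∑ k, ∑ j, x j * conj (x k) * S k j := Finset.sum_comm
      _ = Q := by
            rw [hQexp]
            exact Finset.sum_congr rfl fun k _ => Finset.sum_congr rfl fun j _ => by ring
    exact Complex.conj_eq_iff_im.mp hconj
  rw [Complex.lt_def]
  constructor
  · simp only [Complex.zero_re]
    linarith
  · simp only [Complex.zero_im, him]
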